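/- Let J, J_1, i_0, i_1 and w_j be as in the block decomposition (J = J_1 ∪ {σ_{i_0}}, i_0 minimal, i_1 the maximal integer with σ_i ∈ J for i_0 ≤ i < i_1, w_j = (i_1−j+1,...,i_0+1,i_0)). Let v_J and v_{J_1} denote the longest elements of the parabolic subgroups S_J and S_{J_1}. Then v_J = w_1 · v_{J_1}, where w_1 = (i_1, i_1−1, ..., i_0+1, i_0). -/

import Mathlib

open Equiv

/-- The simple transposition σ_i = (i, i+1) in S_n (0-indexed). -/
def simpleT (n i : ℕ) (h : i + 1 < n) : Perm (Fin n) :=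
  Equiv.swap ⟨i, Nat.lt_of_succ_lt h⟩ ⟨i + 1, h⟩

/-- Coxeter length = number of inversions. -/
def len {n : ℕ} (w : Perm (Fin n)) : ℕ :=
  (Finset.univ.filter fun p : Fin n × Fin n => p.1 < p.2 ∧ w p.2 < w p.1).card

/-- Parabolic subgroup generated by the simple reflections with indices in J. -/
def SJ (n : ℕ) (J : Set ℕ) : Subgroup (Perm (Fin n)) :=
  Subgroup.closure {s | ∃ i, ∃ h : i + 1 < n, i ∈ J ∧ s = simpleT n i h}

/-- Minimal length left coset representatives: ℓ(ws) > ℓ(w) for all s ∈ J. -/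
def DJ (n : ℕ) (J : Set ℕ) : Set (Perm (Fin n)) :=
  {w | ∀ i, ∀ h : i + 1 < n, i ∈ J → len w < len (w * simpleT n i h)}

/-- Minimal double coset representatives: ℓ(s₁v) > ℓ(v), ℓ(vs₂) > ℓ(v). -/
def D2 (n : ℕ) (J1 J2 : Set ℕ) : Set (Perm (Fin n)) :=
  {v | (∀ i, ∀ h : i + 1 < n, i ∈ J1 → len v < len (simpleT n i h * v)) ∧
       (∀ i, ∀ h : i + 1 < n, i ∈ J2 → len v < len (v * simpleT n i h))}

/-- Bruhat order: reflexive transitive closure of multiplying by a transposition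
while increasing the length. -/
def BruhatLE {n : ℕ} (x y : Perm (Fin n)) : Prop :=
  Relation.ReflTransGen
    (fun u v => (∃ a b : Fin n, a ≠ b ∧ v = Equiv.swap a b * u) ∧ len u < len v) x y

def BruhatLT {n : ℕ} (x y : Perm (Fin n)) : Prop := BruhatLE x y ∧ x ≠ y

/-- w is the cycle (i₁−j+1, …, i₀+1, i₀): sends i to i−1 for i₀ < i ≤ i₁−j+1,
sends i₀ to i₁−j+1, and fixes all other points. -/
def IsCycleW (n i0 i1 j : ℕ) (w : Perm (Fin n)) : Prop :=
  ∀ i : Fin n,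
    ((i0 < (i : ℕ) ∧ (i : ℕ) ≤ i1 - j + 1) → (w i : ℕ) = (i : ℕ) - 1) ∧
    ((i : ℕ) = i0 → (w i : ℕ) = i1 - j + 1) ∧
    (((i : ℕ) < i0 ∨ i1 - j + 1 < (i : ℕ)) → w i = i)

namespace Stmt5Aux

/-- all integers (weakly) between `a` and `b` (excluding the max) lie in `J` -/
def Same (J : Set ℕ) (a b : ℕ) : Prop := ∀ k, min a b ≤ k → k < max a b → k ∈ J

lemma same_refl (J : Set ℕ) (a : ℕ) : Same J a a := by
  intro k h1 h2; simp at h1 h2; omega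

lemma same_symm {J : Set ℕ} {a b : ℕ} (h : Same J a b) : Same J b a := by
  intro k h1 h2; exact h k (by omega) (by omega)

lemma same_trans {J : Set ℕ} {a b c : ℕ} (h1 : Same J a b) (h2 : Same J b c) :
    Same J a c := by
  intro k hk1 hk2
  by_cases hab : min a b ≤ k ∧ k < max a b
  · exact h1 k hab.1 hab.2
  · refine h2 k ?_ ?_ <;> omega

lemma same_mono {J J' : Set ℕ} (hJ : J ⊆ J') {a b : ℕ} (h : Same J a b) :
    Same J' a b := fun k h1 h2 => hJ (h k h1 h2)

lemma same_sub {J : Set ℕ} {a b a' b' : ℕ} (h : Same J a b)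
    (h1 : min a b ≤ min a' b') (h2 : max a' b' ≤ max a b) : Same J a' b' :=
  fun k hk1 hk2 => h k (by omega) (by omega)

/-- membership in the parabolic subgroup preserves `Same`-classes -/
lemma same_of_mem {n : ℕ} {J : Set ℕ} {x : Perm (Fin n)} (hx : x ∈ SJ n J) :
    ∀ i : Fin n, Same J (x i) i := by
  refine Subgroup.closure_induction (p := fun g _ => ∀ i : Fin n, Same J (g i) i)
    ?_ ?_ ?_ ?_ hx
  · rintro s ⟨i, h, hiJ, rfl⟩ j
    by_cases h1 : j = (⟨i, Nat.lt_of_succ_lt h⟩ : Fin n)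
    · subst h1
      rw [simpleT, Equiv.swap_apply_left]
      intro k hk1 hk2
      simp only [Fin.val_mk] at hk1 hk2
      have : k = i := by omega
      rwa [this]
    · by_cases h2 : j = (⟨i + 1, h⟩ : Fin n)
      · subst h2
        rw [simpleT, Equiv.swap_apply_right]
        intro k hk1 hk2
        simp only [Fin.val_mk] at hk1 hk2
        have : k = i := by omega
        rwa [this]
      · rw [simpleT, Equiv.swap_apply_of_ne_of_ne h1 h2]
        exact same_refl J j
  · intro i; simp; exact same_refl J i
  · intro g g' _ _ hg hg' i
    exact same_trans (hg (g' i)) (hg' i)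
  · intro g _ hg i
    have := hg (g⁻¹ i)
    rw [Equiv.Perm.coe_inv, Equiv.apply_symm_apply] at this
    exact same_symm this

/-- inversions only happen inside classes -/
lemma lt_of_not_same {n : ℕ} {J : Set ℕ} {x : Perm (Fin n)} (hx : x ∈ SJ n J)
    {a b : Fin n} (hab : a < b) (hns : ¬ Same J ↑a ↑b) : x a < x b := by
  rw [Same] at hns; push_neg at hns
  obtain ⟨k, hk1, hk2, hk3⟩ := hns
  have h1 : (↑a : ℕ) < ↑b := hab
  have ha := same_of_mem hx a
  have hb := same_of_mem hx b
  have hxa : (x a : ℕ) ≤ k := by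
    by_contra h'
    exact hk3 (ha k (by omega) (by omega))
  have hxb : k < (x b : ℕ) := by
    by_contra h'
    exact hk3 (hb k (by omega) (by omega))
  exact Fin.lt_def.mpr (by omega)

lemma simpleT_coe (n i : ℕ) (h : i + 1 < n) (p : Fin n) :
    ((simpleT n i h) p : ℕ) =
      if (p : ℕ) = i then i + 1 else if (p : ℕ) = i + 1 then i else p := by
  by_cases h1 : p = (⟨i, Nat.lt_of_succ_lt h⟩ : Fin n)
  · subst h1; rw [simpleT, Equiv.swap_apply_left]; simp
  · by_cases h2 : p = (⟨i + 1, h⟩ : Fin n)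
    · subst h2; rw [simpleT, Equiv.swap_apply_right]; simp
    · rw [simpleT, Equiv.swap_apply_of_ne_of_ne h1 h2]
      have h1' : (p : ℕ) ≠ i := fun hh => h1 (Fin.ext hh)
      have h2' : (p : ℕ) ≠ i + 1 := fun hh => h2 (Fin.ext hh)
      rw [if_neg h1', if_neg h2']

lemma len_lt_of_ascent {n : ℕ} (x : Perm (Fin n)) (i : ℕ) (h : i + 1 < n)
    (hasc : x ⟨i, Nat.lt_of_succ_lt h⟩ < x ⟨i + 1, h⟩) :
    len x < len (x * simpleT n i h) := by
  classical
  set s := simpleT n i h with hs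
  set A := Finset.univ.filter fun p : Fin n × Fin n => p.1 < p.2 ∧ x p.2 < x p.1 with hA
  set B := Finset.univ.filter
    (fun p : Fin n × Fin n => p.1 < p.2 ∧ (x * s) p.2 < (x * s) p.1) with hB
  have hgoal : len x = A.card ∧ len (x * s) = B.card := ⟨rfl, rfl⟩
  set φ : Fin n × Fin n → Fin n × Fin n := fun p => (s p.1, s p.2) with hφ
  have hφinj : Function.Injective φ := by
    intro p q hpq
    rw [hφ, Prod.mk.injEq] at hpq
    exact Prod.ext (s.injective hpq.1) (s.injective hpq.2)
  have hss : ∀ p : Fin n, s (s p) = p := by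
    intro p; rw [hs, simpleT]; exact Equiv.swap_apply_self _ _ _
  have key : A.image φ ⊆ B := by
    rw [Finset.image_subset_iff]
    intro p hp
    rw [hA, Finset.mem_filter] at hp
    obtain ⟨-, hlt, hinv⟩ := hp
    have hne : ¬((p.1 : ℕ) = i ∧ (p.2 : ℕ) = i + 1) := by
      rintro ⟨h1, h2⟩
      have e1 : p.1 = (⟨i, Nat.lt_of_succ_lt h⟩ : Fin n) := Fin.ext h1
      have e2 : p.2 = (⟨i + 1, h⟩ : Fin n) := Fin.ext h2
      rw [e1, e2] at hinv
      exact absurd hasc (not_lt.2 hinv.le)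
    have hlt' : (p.1 : ℕ) < (p.2 : ℕ) := hlt
    have hslt : s p.1 < s p.2 := by
      rw [Fin.lt_def, hs, simpleT_coe, simpleT_coe]
      split_ifs <;> omega
    rw [hB, Finset.mem_filter, hφ]
    refine ⟨Finset.mem_univ _, hslt, ?_⟩
    show (x * s) (s p.2) < (x * s) (s p.1)
    rw [Equiv.Perm.mul_apply, Equiv.Perm.mul_apply, hss, hss]
    exact hinv
  have hmem : ((⟨i, Nat.lt_of_succ_lt h⟩ : Fin n), (⟨i + 1, h⟩ : Fin n)) ∈ B := by
    rw [hB, Finset.mem_filter]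
    refine ⟨Finset.mem_univ _, Fin.mk_lt_mk.mpr (lt_add_one i), ?_⟩
    have e1 : s (⟨i + 1, h⟩ : Fin n) = ⟨i, Nat.lt_of_succ_lt h⟩ := by
      rw [hs, simpleT]; exact Equiv.swap_apply_right _ _
    have e2 : s (⟨i, Nat.lt_of_succ_lt h⟩ : Fin n) = ⟨i + 1, h⟩ := by
      rw [hs, simpleT]; exact Equiv.swap_apply_left _ _
    rw [Equiv.Perm.mul_apply, Equiv.Perm.mul_apply, e1, e2]
    exact hasc
  have hnotmem : ((⟨i, Nat.lt_of_succ_lt h⟩ : Fin n), (⟨i + 1, h⟩ : Fin n)) ∉ A.image φ := by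
    intro hcon
    obtain ⟨p, hp, hpe⟩ := Finset.mem_image.mp hcon
    rw [hφ, Prod.mk.injEq] at hpe
    have e1 : p.1 = (⟨i + 1, h⟩ : Fin n) := by
      have := congrArg s hpe.1
      rw [hss] at this
      rw [this, hs, simpleT]; exact Equiv.swap_apply_left _ _
    have e2 : p.2 = (⟨i, Nat.lt_of_succ_lt h⟩ : Fin n) := by
      have := congrArg s hpe.2
      rw [hss] at this
      rw [this, hs, simpleT]; exact Equiv.swap_apply_right _ _
    rw [hA, Finset.mem_filter] at hp
    have : p.1 < p.2 := hp.2.1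
    rw [e1, e2, Fin.mk_lt_mk] at this
    omega
  rw [hgoal.1, hgoal.2]
  calc A.card = (A.image φ).card := (Finset.card_image_of_injective A hφinj).symm
    _ < B.card := Finset.card_lt_card
        ((Finset.ssubset_iff_of_subset key).mpr ⟨_, hmem, hnotmem⟩)

lemma pos_lt {n : ℕ} (C : Finset (Fin n)) {c d : Fin n} (hc : c ∈ C) (hcd : c < d) :
    (C.filter (· < c)).card < (C.filter (· < d)).card := by
  classical
  apply Finset.card_lt_card
  refine (Finset.ssubset_iff_of_subset ?_).mpr ⟨c, ?_, ?_⟩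
  · intro e he
    rw [Finset.mem_filter] at he ⊢
    exact ⟨he.1, lt_trans he.2 hcd⟩
  · rw [Finset.mem_filter]; exact ⟨hc, hcd⟩
  · rw [Finset.mem_filter]; rintro ⟨-, hcon⟩; exact lt_irrefl _ hcon

lemma pos_inj {n : ℕ} (C : Finset (Fin n)) {c d : Fin n} (hc : c ∈ C) (hd : d ∈ C)
    (h : (C.filter (· < c)).card = (C.filter (· < d)).card) : c = d := by
  rcases lt_trichotomy c d with h' | h' | h'
  · exact absurd h (Nat.ne_of_lt (pos_lt C hc h'))
  · exact h'
  · exact absurd h.symm (Nat.ne_of_lt (pos_lt C hd h'))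

lemma pos_card {n : ℕ} (C : Finset (Fin n)) (x : Perm (Fin n))
    (hx1 : ∀ c ∈ C, x c ∈ C)
    (hx2 : ∀ a ∈ C, ∀ b ∈ C, a < b → x b < x a)
    {a : Fin n} (ha : a ∈ C) :
    (C.filter (· < x a)).card = (C.filter (a < ·)).card := by
  classical
  have himg : C.image x = C := by
    apply Finset.eq_of_subset_of_card_le
    · intro c hc
      obtain ⟨b, hb, rfl⟩ := Finset.mem_image.mp hc
      exact hx1 b hb
    · rw [Finset.card_image_of_injective _ x.injective]
  have hset : C.filter (· < x a) = (C.filter (a < ·)).image x := by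
    ext c
    simp only [Finset.mem_filter, Finset.mem_image]
    constructor
    · rintro ⟨hcC, hlt⟩
      have hc' : c ∈ C.image x := by rw [himg]; exact hcC
      obtain ⟨b, hb, rfl⟩ := Finset.mem_image.mp hc'
      refine ⟨b, ⟨hb, ?_⟩, rfl⟩
      rcases lt_trichotomy a b with h' | h' | h'
      · exact h'
      · subst h'; exact absurd hlt (lt_irrefl _)
      · exact absurd (lt_trans hlt (hx2 b hb a ha h')) (lt_irrefl _)
    · rintro ⟨b, ⟨hb, hab⟩, rfl⟩
      exact ⟨hx1 b hb, hx2 a ha b hb hab⟩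
  rw [hset, Finset.card_image_of_injective _ x.injective]

lemma determined {n : ℕ} (C : Finset (Fin n)) (x y : Perm (Fin n))
    (hx1 : ∀ c ∈ C, x c ∈ C) (hx2 : ∀ a ∈ C, ∀ b ∈ C, a < b → x b < x a)
    (hy1 : ∀ c ∈ C, y c ∈ C) (hy2 : ∀ a ∈ C, ∀ b ∈ C, a < b → y b < y a)
    {a : Fin n} (ha : a ∈ C) : x a = y a :=
  pos_inj C (hx1 a ha) (hy1 a ha)
    ((pos_card C x hx1 hx2 ha).trans (pos_card C y hy1 hy2 ha).symm)

lemma desc_chain {n : ℕ} {J : Set ℕ} {x : Perm (Fin n)}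
    (hadj : ∀ i (h : i + 1 < n), i ∈ J → x ⟨i + 1, h⟩ < x ⟨i, Nat.lt_of_succ_lt h⟩) :
    ∀ a b : Fin n, a < b → Same J ↑a ↑b → x b < x a := by
  suffices H : ∀ d (a b : Fin n), (b : ℕ) = ↑a + d + 1 → Same J ↑a ↑b → x b < x a by
    intro a b hab hs
    have : (a : ℕ) < b := hab
    exact H ((b : ℕ) - ↑a - 1) a b (by omega) hs
  intro d
  induction d with
  | zero =>
    intro a b hb hs
    have hJ : (a : ℕ) ∈ J := hs ↑a (by omega) (by omega)
    have hn : (a : ℕ) + 1 < n := by have := b.isLt; omega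
    have h1 := hadj ↑a hn hJ
    have eb : (⟨(a : ℕ) + 1, hn⟩ : Fin n) = b := Fin.ext (show (a:ℕ) + 1 = ↑b by omega)
    have ea : (⟨(a : ℕ), Nat.lt_of_succ_lt hn⟩ : Fin n) = a := Fin.ext rfl
    rwa [eb, ea] at h1
  | succ d ih =>
    intro a b hb hs
    have hm : (a : ℕ) + d + 1 < n := by have := b.isLt; omega
    set m : Fin n := ⟨(a : ℕ) + d + 1, hm⟩ with hmdef
    have hmv : (m : ℕ) = ↑a + d + 1 := rfl
    have h1 : x b < x m := by
      have hJ : ((m : ℕ)) ∈ J := hs ↑m (by omega) (by omega)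
      have hn2 : (m : ℕ) + 1 < n := by have := b.isLt; omega
      have h2 := hadj ↑m hn2 hJ
      have eb : (⟨(m : ℕ) + 1, hn2⟩ : Fin n) = b := Fin.ext (show (m:ℕ) + 1 = ↑b by omega)
      have em : (⟨(m : ℕ), Nat.lt_of_succ_lt hn2⟩ : Fin n) = m := Fin.ext rfl
      rwa [eb, em] at h2
    have h2 : x m < x a :=
      ih a m (by omega) (same_sub hs (by omega) (by omega))
    exact lt_trans h1 h2

lemma max_desc {n : ℕ} {J : Set ℕ} {v : Perm (Fin n)} (hv : v ∈ SJ n J)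
    (hmax : ∀ x ∈ SJ n J, len x ≤ len v) :
    ∀ a b : Fin n, a < b → Same J ↑a ↑b → v b < v a := by
  apply desc_chain
  intro i h hiJ
  rcases lt_trichotomy (v ⟨i + 1, h⟩) (v ⟨i, Nat.lt_of_succ_lt h⟩) with h' | h' | h'
  · exact h'
  · exact absurd (v.injective h') (by simp [Fin.ext_iff])
  · exfalso
    have hmem : v * simpleT n i h ∈ SJ n J :=
      Subgroup.mul_mem _ hv (Subgroup.subset_closure ⟨i, h, hiJ, rfl⟩)
    exact absurd (hmax _ hmem) (not_le.2 (len_lt_of_ascent v i h h'))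

end Stmt5Aux

open Stmt5Aux in
theorem stmt5 (n : ℕ) (J : Set ℕ) (hvalid : ∀ i ∈ J, i + 1 < n)
    (i0 i1 : ℕ) (hi0 : i0 ∈ J) (hmin : ∀ i ∈ J, i0 ≤ i)
    (hblock : ∀ i, i0 ≤ i → i < i1 → i ∈ J) (hmax : i1 ∉ J) (hlt : i0 < i1)
    (w1 : Perm (Fin n)) (hw1 : IsCycleW n i0 i1 1 w1)
    (vJ vJ1 : Perm (Fin n))
    (hvJ : vJ ∈ SJ n J) (hvJmax : ∀ x ∈ SJ n J, len x ≤ len vJ)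
    (hvJ1 : vJ1 ∈ SJ n (J \ {i0}))
    (hvJ1max : ∀ x ∈ SJ n (J \ {i0}), len x ≤ len vJ1) :
    vJ = w1 * vJ1 := by
  classical
  set J1 : Set ℕ := J \ {i0} with hJ1def
  have hJ1sub : J1 ⊆ J := Set.diff_subset
  have hi1n : i1 < n := by
    have := hvalid (i1 - 1) (hblock (i1 - 1) (by omega) (by omega))
    omega
  have hw1a : ∀ i : Fin n, i0 < (i : ℕ) → (i : ℕ) ≤ i1 → ((w1 i : ℕ)) = (i : ℕ) - 1 :=
    fun i h1 h2 => (hw1 i).1 ⟨h1, by omega⟩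
  have hw1b : ∀ i : Fin n, (i : ℕ) = i0 → ((w1 i : ℕ)) = i1 := by
    intro i h1; have := (hw1 i).2.1 h1; omega
  have hw1c : ∀ i : Fin n, ((i : ℕ) < i0 ∨ i1 < (i : ℕ)) → w1 i = i :=
    fun i h1 => (hw1 i).2.2 (by omega)
  have blockSame : ∀ a b : ℕ, i0 ≤ a → a ≤ i1 → i0 ≤ b → b ≤ i1 → Same J a b :=
    fun a b h1 h2 h3 h4 k hk1 hk2 => hblock k (by omega) (by omega)
  have blockCl : ∀ a c : ℕ, i0 ≤ a → a ≤ i1 → Same J c a → i0 ≤ c ∧ c ≤ i1 := by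
    intro a c h1 h2 hs
    constructor
    · by_contra h'
      push_neg at h'
      exact absurd (hmin c (hs c (by omega) (by omega))) (by omega)
    · by_contra h'
      push_neg at h'
      exact hmax (hs i1 (by omega) (by omega))
  have singlCl : ∀ a c : ℕ, a < i0 → Same J c a → c = a := by
    intro a c h1 hs
    rcases lt_trichotomy c a with h' | h' | h'
    · exact absurd (hmin c (hs c (by omega) (by omega))) (by omega)
    · exact h'
    · exact absurd (hmin a (hs a (by omega) (by omega))) (by omega)
  have upCl : ∀ a c : ℕ, i1 < a → Same J c a → i1 < c := by
    intro a c h1 hs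
    by_contra h'
    push_neg at h'
    exact hmax (hs i1 (by omega) (by omega))
  have upEq : ∀ a c : ℕ, i1 < a → i1 < c → (Same J c a ↔ Same J1 c a) := by
    intro a c h1 h2
    constructor
    · intro hs k hk1 hk2
      rw [hJ1def, Set.mem_diff]
      exact ⟨hs k hk1 hk2, by simp only [Set.mem_singleton_iff]; omega⟩
    · exact same_mono hJ1sub
  have j1fix : ∀ c : ℕ, Same J1 c i0 → c = i0 := by
    intro c hs
    rcases lt_trichotomy c i0 with h' | h' | h'
    · have hm := hs c (by omega) (by omega)
      rw [hJ1def, Set.mem_diff] at hm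
      exact absurd (hmin c hm.1) (by omega)
    · exact h'
    · have hm := hs i0 (by omega) (by omega)
      rw [hJ1def, Set.mem_diff] at hm
      exact absurd (Set.mem_singleton i0) hm.2
  have j1blockCl : ∀ a c : ℕ, i0 < a → a ≤ i1 → Same J1 c a → i0 < c ∧ c ≤ i1 := by
    intro a c h1 h2 hs
    constructor
    · by_contra h'
      push_neg at h'
      have hm := hs i0 (by omega) (by omega)
      rw [hJ1def, Set.mem_diff] at hm
      exact hm.2 rfl
    · by_contra h'
      push_neg at h'
      have hm := hs i1 (by omega) (by omega)
      rw [hJ1def, Set.mem_diff] at hm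
      exact hmax hm.1
  have j1blockSame : ∀ a b : ℕ, i0 < a → a ≤ i1 → i0 < b → b ≤ i1 → Same J1 a b := by
    intro a b h1 h2 h3 h4 k hk1 hk2
    rw [hJ1def, Set.mem_diff]
    exact ⟨hblock k (by omega) (by omega), by simp only [Set.mem_singleton_iff]; omega⟩
  have hvJsame := same_of_mem hvJ
  have hvJ1same := same_of_mem hvJ1
  have hvJdesc := max_desc hvJ hvJmax
  have hvJ1desc := max_desc hvJ1 hvJ1max
  have hvJ1fix : ∀ c : Fin n, (c : ℕ) = i0 → vJ1 c = c := by
    intro c h1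
    apply Fin.ext
    have hs := hvJ1same c
    rw [h1] at hs
    rw [j1fix ↑(vJ1 c) hs, h1]
  have hvJ1block : ∀ c : Fin n, i0 < (c : ℕ) → (c : ℕ) ≤ i1 →
      (i0 < (vJ1 c : ℕ) ∧ (vJ1 c : ℕ) ≤ i1) :=
    fun c h1 h2 => j1blockCl ↑c ↑(vJ1 c) h1 h2 (hvJ1same c)
  apply Equiv.ext
  intro a
  by_cases hc1 : (a : ℕ) < i0
  · have e1 : vJ a = a := Fin.ext (singlCl ↑a ↑(vJ a) hc1 (hvJsame a))
    have e2 : vJ1 a = a :=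
      Fin.ext (singlCl ↑a ↑(vJ1 a) hc1 (same_mono hJ1sub (hvJ1same a)))
    rw [Equiv.Perm.mul_apply, e1, e2, hw1c a (Or.inl hc1)]
  by_cases hc2 : i1 < (a : ℕ)
  · set C : Finset (Fin n) := Finset.univ.filter (fun c => Same J ↑c ↑a) with hCdef
    have hmemC : ∀ c : Fin n, c ∈ C ↔ Same J ↑c ↑a := by
      intro c; rw [hCdef, Finset.mem_filter]; simp
    have haC : a ∈ C := (hmemC a).mpr (same_refl _ _)
    have hCup : ∀ c ∈ C, i1 < (c : ℕ) := fun c hcC => upCl ↑a ↑c hc2 ((hmemC c).mp hcC)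
    have hCsame : ∀ c ∈ C, ∀ d ∈ C, Same J ↑c ↑d := fun c hcC d hdC =>
      same_trans ((hmemC c).mp hcC) (same_symm ((hmemC d).mp hdC))
    have hx1 : ∀ c ∈ C, vJ c ∈ C := fun c hcC =>
      (hmemC _).mpr (same_trans (hvJsame c) ((hmemC c).mp hcC))
    have hx2 : ∀ c ∈ C, ∀ d ∈ C, c < d → vJ d < vJ c := fun c hcC d hdC hcd =>
      hvJdesc c d hcd (hCsame c hcC d hdC)
    have hy1' : ∀ c ∈ C, vJ1 c ∈ C := by
      intro c hcC
      have h1 : Same J1 ↑(vJ1 c) ↑a :=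
        same_trans (hvJ1same c) ((upEq ↑a ↑c hc2 (hCup c hcC)).mp ((hmemC c).mp hcC))
      exact (hmemC _).mpr (same_mono hJ1sub h1)
    have hy2' : ∀ c ∈ C, ∀ d ∈ C, c < d → vJ1 d < vJ1 c := by
      intro c hcC d hdC hcd
      exact hvJ1desc c d hcd
        ((upEq ↑d ↑c (hCup d hdC) (hCup c hcC)).mp (hCsame c hcC d hdC))
    have hy1 : ∀ c ∈ C, (w1 * vJ1) c ∈ C := by
      intro c hcC
      rw [Equiv.Perm.mul_apply, hw1c _ (Or.inr (hCup _ (hy1' c hcC)))]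
      exact hy1' c hcC
    have hy2 : ∀ c ∈ C, ∀ d ∈ C, c < d → (w1 * vJ1) d < (w1 * vJ1) c := by
      intro c hcC d hdC hcd
      rw [Equiv.Perm.mul_apply, Equiv.Perm.mul_apply,
        hw1c _ (Or.inr (hCup _ (hy1' c hcC))), hw1c _ (Or.inr (hCup _ (hy1' d hdC)))]
      exact hy2' c hcC d hdC hcd
    exact determined C vJ (w1 * vJ1) hx1 hx2 hy1 hy2 haC
  · -- middle case : i0 ≤ a ≤ i1
    push_neg at hc1 hc2
    set C : Finset (Fin n) :=
      Finset.univ.filter (fun c : Fin n => i0 ≤ (c : ℕ) ∧ (c : ℕ) ≤ i1) with hCdef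
    have hmemC : ∀ c : Fin n, c ∈ C ↔ (i0 ≤ (c : ℕ) ∧ (c : ℕ) ≤ i1) := by
      intro c; rw [hCdef, Finset.mem_filter]; simp
    have haC : a ∈ C := (hmemC a).mpr ⟨hc1, hc2⟩
    have hx1 : ∀ c ∈ C, vJ c ∈ C := by
      intro c hcC
      obtain ⟨h1, h2⟩ := (hmemC c).mp hcC
      exact (hmemC _).mpr (blockCl ↑c ↑(vJ c) h1 h2 (hvJsame c))
    have hx2 : ∀ c ∈ C, ∀ d ∈ C, c < d → vJ d < vJ c := by
      intro c hcC d hdC hcd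
      obtain ⟨h1, h2⟩ := (hmemC c).mp hcC
      obtain ⟨h3, h4⟩ := (hmemC d).mp hdC
      exact hvJdesc c d hcd (blockSame ↑c ↑d h1 h2 h3 h4)
    have hy1 : ∀ c ∈ C, (w1 * vJ1) c ∈ C := by
      intro c hcC
      rw [Equiv.Perm.mul_apply]
      obtain ⟨hcl, hcu⟩ := (hmemC c).mp hcC
      rcases eq_or_lt_of_le hcl with h' | h'
      · rw [hvJ1fix c h'.symm]
        have hb := hw1b c h'.symm
        exact (hmemC _).mpr (by omega)
      · obtain ⟨hb1, hb2⟩ := hvJ1block c h' hcu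
        have hb := hw1a (vJ1 c) hb1 hb2
        exact (hmemC _).mpr (by omega)
    have hy2 : ∀ c ∈ C, ∀ d ∈ C, c < d → (w1 * vJ1) d < (w1 * vJ1) c := by
      intro c hcC d hdC hcd
      rw [Equiv.Perm.mul_apply, Equiv.Perm.mul_apply]
      obtain ⟨hcl, hcu⟩ := (hmemC c).mp hcC
      obtain ⟨hdl, hdu⟩ := (hmemC d).mp hdC
      have hcd' : (c : ℕ) < (d : ℕ) := hcd
      rw [Fin.lt_def]
      rcases eq_or_lt_of_le hcl with h' | h'
      · rw [hvJ1fix c h'.symm]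
        have e1 := hw1b c h'.symm
        obtain ⟨hb1, hb2⟩ := hvJ1block d (by omega) hdu
        have e2 := hw1a (vJ1 d) hb1 hb2
        omega
      · obtain ⟨hb1, hb2⟩ := hvJ1block c h' hcu
        obtain ⟨hb3, hb4⟩ := hvJ1block d (by omega) hdu
        have e1 := hw1a (vJ1 c) hb1 hb2
        have e2 := hw1a (vJ1 d) hb3 hb4
        have hdesc : vJ1 d < vJ1 c :=
          hvJ1desc c d hcd (j1blockSame ↑c ↑d h' hcu (by omega) hdu)
        have hdesc' : (↑(vJ1 d) : ℕ) < ↑(vJ1 c) := hdesc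
        omega
    exact determined C vJ (w1 * vJ1) hx1 hx2 hy1 hy2 haC
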